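/- Suppose a pushout diagram of systems of sets: D_t = B_t ⊔_{A_t} C_t for all t, naturally in t, where f : A → B is an r-bijection. Then the induced map f' : C → D is an r-bijection. -/

import Mathlib

open scoped NNReal

/-- A system of sets: a functor `[0,∞) → Set`, given by sets `X_s` and compatible
structure maps `σ : X_s → X_t` for `s ≤ t`. -/
structure SysSet where
  obj : ℝ≥0 → Type
  map : ∀ {s t : ℝ≥0}, s ≤ t → obj s → obj t
  map_id : ∀ (s : ℝ≥0) (x : obj s), map le_rfl x = x
  map_comp : ∀ {s t u : ℝ≥0} (h₁ : s ≤ t) (h₂ : t ≤ u) (x : obj s),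
    map h₂ (map h₁ x) = map (h₁.trans h₂) x

/-- A map of systems of sets: a natural transformation of functors. -/
structure SysSet.Hom (X Y : SysSet) where
  app : ∀ s, X.obj s → Y.obj s
  naturality : ∀ {s t : ℝ≥0} (h : s ≤ t) (x : X.obj s),
    app t (X.map h x) = Y.map h (app s x)

/-- Composition of maps of systems (`(f.comp g) = g ∘ f`). -/
def SysSet.Hom.comp {X Y Z : SysSet} (f : X.Hom Y) (g : Y.Hom Z) : X.Hom Z where
  app s x := g.app s (f.app s x)
  naturality h x := by simp only [f.naturality, g.naturality]

/-- `f` is an `r`-monomorphism: if `f(x) = f(y)` in `Y_s` then `σ(x) = σ(y)` in `X_{s+r}`. -/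
def SysSet.Hom.IsMono {X Y : SysSet} (r : ℝ≥0) (f : X.Hom Y) : Prop :=
  ∀ (s : ℝ≥0) (x y : X.obj s), f.app s x = f.app s y →
    X.map (le_self_add : s ≤ s + r) x = X.map le_self_add y

/-- `f` is an `r`-epimorphism: every `y ∈ Y_s` satisfies `σ(y) = f(x)` in `Y_{s+r}` for
some `x ∈ X_{s+r}`. -/
def SysSet.Hom.IsEpi {X Y : SysSet} (r : ℝ≥0) (f : X.Hom Y) : Prop :=
  ∀ (s : ℝ≥0) (y : Y.obj s), ∃ x : X.obj (s + r),
    f.app (s + r) x = Y.map (le_self_add : s ≤ s + r) y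

/-- `f` is an `r`-isomorphism if it is both an `r`-monomorphism and an `r`-epimorphism. -/
def SysSet.Hom.IsIso {X Y : SysSet} (r : ℝ≥0) (f : X.Hom Y) : Prop :=
  f.IsMono r ∧ f.IsEpi r

open CategoryTheory

open CategoryTheory.Limits

section Key

variable {At Bt Ct Cr : Type} (f : At → Bt) (α : At → Ct) (σC : Ct → Cr) (σα : At → Cr)

/-- Invariant transported along the pushout equivalence relation. -/
def pushRR : Bt ⊕ Ct → Bt ⊕ Ct → Prop
  | .inl b, .inl b' => b = b' ∨ ((∃ a, f a = b) ∧ (∃ a', f a' = b') ∧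
      ∀ a a', f a = b → f a' = b' → σα a = σα a')
  | .inl b, .inr c => (∃ a, f a = b) ∧ ∀ a, f a = b → σα a = σC c
  | .inr c, .inl b => (∃ a, f a = b) ∧ ∀ a, f a = b → σα a = σC c
  | .inr c, .inr c' => σC c = σC c'

lemma pushRR_of_eqvGen (hcomm : ∀ a, σC (α a) = σα a)
    (hmono : ∀ a a', f a = f a' → σα a = σα a') :
    ∀ u v, Relation.EqvGen (Types.Pushout.Rel (TypeCat.ofHom f) (TypeCat.ofHom α)) u v → pushRR f σC σα u v := by
  intro u v h
  induction h with
  | rel u v h =>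
    cases h with
    | inl_inr a =>
      exact ⟨⟨a, rfl⟩, fun a' ha' => (hmono a' a ha').trans (hcomm a).symm⟩
  | refl u =>
    cases u with
    | inl b => exact Or.inl rfl
    | inr c => exact rfl
  | symm u v h ih =>
    match u, v, ih with
    | .inl b, .inl b', ih =>
      exact ih.elim (fun h => Or.inl h.symm)
        (fun ⟨e1, e2, H⟩ => Or.inr ⟨e2, e1, fun a a' ha ha' => (H a' a ha' ha).symm⟩)
    | .inl b, .inr c, ih => exact ih
    | .inr c, .inl b, ih => exact ih
    | .inr c, .inr c', ih => exact ih.symm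
  | trans u v w h1 h2 ih1 ih2 =>
    match u, v, w, ih1, ih2 with
    | .inl b₀, .inl b, .inl b₂, ih1, ih2 =>
      rcases ih1 with rfl | ⟨⟨a₀, h₀⟩, ⟨a, ha⟩, H1⟩
      · exact ih2
      rcases ih2 with rfl | ⟨⟨a', ha'⟩, ⟨a₂, h₂⟩, H2⟩
      · exact Or.inr ⟨⟨a₀, h₀⟩, ⟨a, ha⟩, H1⟩
      exact Or.inr ⟨⟨a₀, h₀⟩, ⟨a₂, h₂⟩, fun x y hx hy =>
        ((H1 x a hx ha).trans (hmono a a' (ha.trans ha'.symm))).trans (H2 a' y ha' hy)⟩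
    | .inl b₀, .inl b, .inr c, ih1, ih2 =>
      rcases ih1 with rfl | ⟨⟨a₀, h₀⟩, ⟨a, ha⟩, H1⟩
      · exact ih2
      obtain ⟨⟨a', ha'⟩, H2⟩ := ih2
      exact ⟨⟨a₀, h₀⟩, fun x hx =>
        ((H1 x a hx ha).trans (hmono a a' (ha.trans ha'.symm))).trans (H2 a' ha')⟩
    | .inr c, .inl b, .inl b₂, ih1, ih2 =>
      obtain ⟨⟨a, ha⟩, H1⟩ := ih1
      rcases ih2 with rfl | ⟨⟨a', ha'⟩, ⟨a₂, h₂⟩, H2⟩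
      · exact ⟨⟨a, ha⟩, H1⟩
      exact ⟨⟨a₂, h₂⟩, fun y hy =>
        ((H2 a' y ha' hy).symm.trans (hmono a' a (ha'.trans ha.symm))).trans (H1 a ha)⟩
    | .inr c, .inl b, .inr c', ih1, ih2 =>
      obtain ⟨⟨a, ha⟩, H1⟩ := ih1
      obtain ⟨⟨a', ha'⟩, H2⟩ := ih2
      exact (H1 a ha).symm.trans ((hmono a a' (ha.trans ha'.symm)).trans (H2 a' ha'))
    | .inl b₀, .inr c, .inl b₂, ih1, ih2 =>
      exact Or.inr ⟨ih1.1, ih2.1, fun x y hx hy => (ih1.2 x hx).trans (ih2.2 y hy).symm⟩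
    | .inl b₀, .inr c, .inr c', ih1, ih2 =>
      exact ⟨ih1.1, fun x hx => (ih1.2 x hx).trans ih2⟩
    | .inr c₀, .inr c, .inl b₂, ih1, ih2 =>
      exact ⟨ih2.1, fun a ha => (ih2.2 a ha).trans ih1.symm⟩
    | .inr c₀, .inr c, .inr c', ih1, ih2 => exact ih1.trans ih2

end Key

/-- If `D` is the sectionwise pushout of `B ← A → C` in sets, natural in the parameter,
and `f : A → B` is an `r`-bijection, then the induced map `f' : C → D` is an
`r`-bijection. -/
theorem stmt15 {A B C D : SysSet} (f : A.Hom B) (α : A.Hom C)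
    (β : B.Hom D) (f' : C.Hom D)
    (hpo : ∀ t : ℝ≥0, CategoryTheory.IsPushout (C := Type)
      (TypeCat.ofHom (f.app t)) (TypeCat.ofHom (α.app t)) (TypeCat.ofHom (β.app t))
      (TypeCat.ofHom (f'.app t)))
    (r : ℝ≥0) (hf : f.IsIso r) : f'.IsIso r := by
  obtain ⟨hm, he⟩ := hf
  have comm : ∀ (s : ℝ≥0) (a : A.obj s), β.app s (f.app s a) = f'.app s (α.app s a) :=
    fun s a => by have := ConcreteCategory.congr_hom (hpo s).w a; simpa using this
  constructor
  · -- mono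
    intro t x y hxy
    set e := IsColimit.coconePointUniqueUpToIso (hpo t).isColimit
      (Types.Pushout.isColimitCocone (TypeCat.ofHom (f.app t)) (TypeCat.ofHom (α.app t))) with heq
    have hinr : ∀ c : C.obj t, e.hom (f'.app t c) =
        (Quot.mk _ (Sum.inr c) : Types.Pushout (TypeCat.ofHom (f.app t)) (TypeCat.ofHom (α.app t))) := by
      intro c
      have := ConcreteCategory.congr_hom ((hpo t).isColimit.comp_coconePointUniqueUpToIso_hom
        (Types.Pushout.isColimitCocone (TypeCat.ofHom (f.app t)) (TypeCat.ofHom (α.app t))) WalkingSpan.right) c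
      rw [← heq] at this
      exact this
    have hq : (Quot.mk _ (Sum.inr x) : Types.Pushout (TypeCat.ofHom (f.app t)) (TypeCat.ofHom (α.app t))) =
        Quot.mk _ (Sum.inr y) := by
      rw [← hinr, ← hinr, hxy]
    have key := pushRR_of_eqvGen (f.app t) (α.app t)
      (C.map (le_self_add : t ≤ t + r))
      (fun a => C.map (le_self_add : t ≤ t + r) (α.app t a))
      (fun a => rfl)
      (fun a a' h => by
        show C.map _ (α.app t a) = C.map _ (α.app t a')
        rw [← α.naturality, ← α.naturality, hm t a a' h])
      _ _ (Quot.eqvGen_exact hq)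
    exact key
  · -- epi
    intro t d
    set e := IsColimit.coconePointUniqueUpToIso (hpo t).isColimit
      (Types.Pushout.isColimitCocone (TypeCat.ofHom (f.app t)) (TypeCat.ofHom (α.app t))) with heq
    obtain ⟨q, hq⟩ := Quot.exists_rep (e.hom d)
    have hd : e.inv (e.hom d) = d := by
      have := ConcreteCategory.congr_hom e.hom_inv_id d
      exact this
    have hinl : ∀ b : B.obj t, e.inv (Quot.mk _ (Sum.inl b)) = β.app t b := by
      intro b
      have h1 := ConcreteCategory.congr_hom ((hpo t).isColimit.comp_coconePointUniqueUpToIso_hom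
        (Types.Pushout.isColimitCocone (TypeCat.ofHom (f.app t)) (TypeCat.ofHom (α.app t))) WalkingSpan.left) b
      rw [← heq] at h1
      simp only [IsPushout.cocone, CommSq.cocone] at h1
      have : (Quot.mk _ (Sum.inl b) : Types.Pushout (TypeCat.ofHom (f.app t)) (TypeCat.ofHom (α.app t))) =
          e.hom (β.app t b) := by
        exact h1.symm
      rw [this]
      have := ConcreteCategory.congr_hom e.hom_inv_id (β.app t b)
      exact this
    have hinr : ∀ c : C.obj t, e.inv (Quot.mk _ (Sum.inr c)) = f'.app t c := by
      intro c
      have h1 := ConcreteCategory.congr_hom ((hpo t).isColimit.comp_coconePointUniqueUpToIso_hom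
        (Types.Pushout.isColimitCocone (TypeCat.ofHom (f.app t)) (TypeCat.ofHom (α.app t))) WalkingSpan.right) c
      rw [← heq] at h1
      simp only [IsPushout.cocone, CommSq.cocone] at h1
      have : (Quot.mk _ (Sum.inr c) : Types.Pushout (TypeCat.ofHom (f.app t)) (TypeCat.ofHom (α.app t))) =
          e.hom (f'.app t c) := by
        exact h1.symm
      rw [this]
      have := ConcreteCategory.congr_hom e.hom_inv_id (f'.app t c)
      exact this
    cases q with
    | inl b =>
      have hdb : d = β.app t b := by rw [← hd, ← hq, hinl]
      obtain ⟨a, ha⟩ := he t b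
      refine ⟨α.app (t + r) a, ?_⟩
      rw [← comm (t + r) a, ha, β.naturality, hdb]
    | inr c =>
      have hdc : d = f'.app t c := by rw [← hd, ← hq, hinr]
      exact ⟨C.map le_self_add c, by rw [f'.naturality, hdc]⟩
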